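/- Let n = 3 and let G ⊆ SL(3,ℂ) be a finite abelian subgroup. Let θ, θ₀ ∈ Θ, let A₁ ⊆ Irr(G) be a nonempty proper subset with θ₀(A₁) = 0, and suppose A₁ and its complement A₂ are the only nonempty proper subsets A ⊆ Irr(G) with θ₀(A) = 0. Let F be a θ-stable G-constellation with θ₀(E) ≥ 0 for every G-submodule E of F. If F is not θ₀-stable, then F possesses a G-submodule S with θ₀(S) = 0 whose underlying G-representation is ⊕_{ρ∈A₁} ρ or ⊕_{ρ∈A₂} ρ, and every such submodule S is itself θ₀-stable. -/

import Mathlib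

/-!
Common setup: `G`-constellations for a finite subgroup `G ⊆ GL(n,ℂ)`.

* `polyAct g` is the action of `g ∈ GL(n,ℂ)` on the polynomial ring
  `A = ℂ[x₁,…,xₙ]` given by `(g·f)(x) = f(g⁻¹·x)`.
* `GMod n G F` is a `G`-equivariant `A`-module structure on the ℂ-vector space `F`:
  an `A`-module structure `actA` (as a ℂ-algebra map `A →ₐ End ℂ F`), a `G`-action
  `actG` by ℂ-linear automorphisms, and the compatibility `g·(f·v) = (g·f)·(g·v)`.
* `IrrChar G` is the set of irreducible complex characters of `G`.
* `multChar ρ χ` is the multiplicity `m_ρ` read off from a character `χ`,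
  `thetaOfChar θ χ = Σ_ρ m_ρ(χ)·θ(ρ)`.
* `IsThetaParam G θ` says `θ ∈ Θ`, i.e. `Σ_ρ (dim ρ)·θ(ρ) = 0`;
  `IsThetaPlus G θ` says `θ ∈ Θ₊`.
* `M.IsSub E` says the ℂ-subspace `E` is a `G`-submodule; `M.subChar E h` is the
  character of the induced `G`-representation on `E`.
* `M.IsConstellation` : `F` is finite dimensional and isomorphic, as a
  `ℂ[G]`-module, to the regular representation `Map(G,ℂ)`.
* `M.IsStable θ` / `M.IsSemistable θ` : `θ(E) > 0` (resp. `≥ 0`) for every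
  `G`-submodule `0 ≠ E ≠ F`.
* `IsGHom M M' φ` : `φ` is simultaneously `A`-linear and `G`-equivariant.
-/

open CategoryTheory

noncomputable section

/-- The action of `g ∈ GL(n,ℂ)` on polynomials, `(g·f)(x) = f(g⁻¹·x)`:
the variable `xᵢ` is replaced by `∑ⱼ (g⁻¹)ᵢⱼ xⱼ`. -/
def polyAct {n : ℕ} (g : GL (Fin n) ℂ) :
    MvPolynomial (Fin n) ℂ →ₐ[ℂ] MvPolynomial (Fin n) ℂ :=
  MvPolynomial.aeval fun i =>
    ∑ j : Fin n, ((g⁻¹ : GL (Fin n) ℂ) : Matrix (Fin n) (Fin n) ℂ) i j • MvPolynomial.X j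

/-- A `G`-equivariant module over `A = ℂ[x₁,…,xₙ]` on the ℂ-vector space `F`. -/
structure GMod (n : ℕ) (G : Subgroup (GL (Fin n) ℂ)) (F : Type)
    [AddCommGroup F] [Module ℂ F] : Type where
  actA : MvPolynomial (Fin n) ℂ →ₐ[ℂ] Module.End ℂ F
  actG : G →* (F ≃ₗ[ℂ] F)
  equivariance : ∀ (g : G) (f : MvPolynomial (Fin n) ℂ) (v : F),
    actG g (actA f v) = actA (polyAct (g : GL (Fin n) ℂ) f) (actG g v)

/-- The irreducible complex characters of `G`. -/
def IrrChar {n : ℕ} (G : Subgroup (GL (Fin n) ℂ)) : Type :=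
  {χ : G → ℂ // ∃ V : FDRep ℂ G, Simple V ∧ ∀ g : G, FDRep.character V g = χ g}

/-- The multiplicity `m_ρ` of the irreducible character `ρ` in a character `χ`,
computed by the usual inner product of characters. -/
def multChar {n : ℕ} {G : Subgroup (GL (Fin n) ℂ)} (ρ : IrrChar G) (χ : G → ℂ) : ℂ :=
  (Nat.card G : ℂ)⁻¹ * ∑ᶠ g : G, ρ.1 g⁻¹ * χ g

/-- `θ(E) = Σ_ρ m_ρ(E)·θ(ρ)`, computed from the character of `E`. -/
def thetaOfChar {n : ℕ} {G : Subgroup (GL (Fin n) ℂ)}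
    (θ : IrrChar G → ℚ) (χ : G → ℂ) : ℂ :=
  ∑ᶠ ρ : IrrChar G, multChar ρ χ * (θ ρ : ℂ)

/-- `θ ∈ Θ`, i.e. `Σ_ρ (dim ρ)·θ(ρ) = 0` (note `dim ρ = ρ(1)`). -/
def IsThetaParam {n : ℕ} (G : Subgroup (GL (Fin n) ℂ)) (θ : IrrChar G → ℚ) : Prop :=
  ∑ᶠ ρ : IrrChar G, ρ.1 1 * (θ ρ : ℂ) = 0

/-- `θ ∈ Θ₊`, i.e. `θ ∈ Θ` and `θ(ρ) > 0` for every nontrivial `ρ ∈ Irr(G)`. -/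
def IsThetaPlus {n : ℕ} (G : Subgroup (GL (Fin n) ℂ)) (θ : IrrChar G → ℚ) : Prop :=
  IsThetaParam G θ ∧ ∀ ρ : IrrChar G, ρ.1 ≠ (fun _ => (1 : ℂ)) → 0 < θ ρ

namespace GMod

variable {n : ℕ} {G : Subgroup (GL (Fin n) ℂ)} {F F' : Type}
  [AddCommGroup F] [Module ℂ F] [AddCommGroup F'] [Module ℂ F']

/-- The character of the `G`-representation `F`. -/
def char (M : GMod n G F) : G → ℂ :=
  fun g => LinearMap.trace ℂ F ↑(M.actG g)

/-- `E` is a `G`-submodule: a subspace stable under the `A`-action and the `G`-action. -/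
def IsSub (M : GMod n G F) (E : Submodule ℂ F) : Prop :=
  (∀ (f : MvPolynomial (Fin n) ℂ) (v : F), v ∈ E → M.actA f v ∈ E) ∧
  (∀ (g : G) (v : F), v ∈ E → M.actG g v ∈ E)

/-- The character of the `G`-representation on a `G`-stable subspace `E`. -/
def subChar (M : GMod n G F) (E : Submodule ℂ F)
    (h : ∀ (g : G) (v : F), v ∈ E → M.actG g v ∈ E) : G → ℂ :=
  fun g => LinearMap.trace ℂ E
    ((↑(M.actG g) : F →ₗ[ℂ] F).restrict (p := E) (q := E) (fun v hv => by exact h g v hv))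

/-- `F` is a `G`-constellation: finite dimensional and isomorphic as a `ℂ[G]`-module
to the regular representation `Map(G,ℂ)` (with `(g·φ)(h) = φ(g⁻¹h)`). -/
def IsConstellation (M : GMod n G F) : Prop :=
  FiniteDimensional ℂ F ∧
  ∃ e : F ≃ₗ[ℂ] (G → ℂ), ∀ (g : G) (v : F) (h : G), e (M.actG g v) h = e v (g⁻¹ * h)

/-- `θ`-stability: `θ(E) > 0` for every `G`-submodule `0 ≠ E ≠ F`. -/
def IsStable (M : GMod n G F) (θ : IrrChar G → ℚ) : Prop :=
  ∀ (E : Submodule ℂ F) (hE : M.IsSub E), E ≠ ⊥ → E ≠ ⊤ →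
    0 < (thetaOfChar θ (M.subChar E hE.2)).re

/-- `θ`-semistability: `θ(E) ≥ 0` for every `G`-submodule `0 ≠ E ≠ F`. -/
def IsSemistable (M : GMod n G F) (θ : IrrChar G → ℚ) : Prop :=
  ∀ (E : Submodule ℂ F) (hE : M.IsSub E), E ≠ ⊥ → E ≠ ⊤ →
    0 ≤ (thetaOfChar θ (M.subChar E hE.2)).re

/-- The subspace `F^G` of `G`-invariant vectors. -/
def invariants (M : GMod n G F) : Submodule ℂ F where
  carrier := {v | ∀ g : G, M.actG g v = v}
  add_mem' := by
    intro a b ha hb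
    intro g
    rw [map_add, ha g, hb g]
  zero_mem' := by
    intro g
    rw [map_zero]
  smul_mem' := by
    intro c v hv
    intro g
    rw [map_smul, hv g]

/-- The `A`-submodule of `F` generated by a subset `s ⊆ F`. -/
def aspan (M : GMod n G F) (s : Set F) : Submodule ℂ F :=
  Submodule.span ℂ {w | ∃ (f : MvPolynomial (Fin n) ℂ) (v : F), v ∈ s ∧ w = M.actA f v}

end GMod

/-- `φ : F → F'` is simultaneously `A`-linear and `G`-equivariant. -/
def IsGHom {n : ℕ} {G : Subgroup (GL (Fin n) ℂ)} {F F' : Type}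
    [AddCommGroup F] [Module ℂ F] [AddCommGroup F'] [Module ℂ F']
    (M : GMod n G F) (M' : GMod n G F') (φ : F →ₗ[ℂ] F') : Prop :=
  (∀ (f : MvPolynomial (Fin n) ℂ) (v : F), φ (M.actA f v) = M'.actA f (φ v)) ∧
  (∀ (g : G) (v : F), φ (M.actG g v) = M'.actG g (φ v))

end

noncomputable section CharHelpers

open Module

variable {H : Type} [Group H]

/-- eigenfunction attached to a character -/
def ef (χ : H →* ℂ) : H → ℂ := fun h => χ h⁻¹

/-- translation action on functions -/
def Tr (g : H) : (H → ℂ) →ₗ[ℂ] (H → ℂ) where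
  toFun φ := fun h => φ (g⁻¹ * h)
  map_add' _ _ := rfl
  map_smul' _ _ := rfl

lemma Tr_apply (g : H) (φ : H → ℂ) (h : H) : Tr g φ h = φ (g⁻¹ * h) := rfl

lemma Tr_ef (hab : ∀ a b : H, a * b = b * a) (g : H) (χ : H →* ℂ) :
    Tr g (ef χ) = χ g • ef χ := by
  funext h
  simp only [Tr_apply, ef, Pi.smul_apply, smul_eq_mul, mul_inv_rev, inv_inv]
  rw [map_mul]; ring

lemma li_ef (hab : ∀ a b : H, a * b = b * a) :
    LinearIndependent ℂ (ef : (H →* ℂ) → (H → ℂ)) := by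
  letI : CommGroup H := { (inferInstance : Group H) with mul_comm := hab }
  have key : (ef : (H →* ℂ) → (H → ℂ)) =
      (fun f : H →* ℂ => ⇑f) ∘ (fun χ : H →* ℂ => χ.comp (invMonoidHom)) := by
    funext χ; funext h; rfl
  rw [key]
  refine (linearIndependent_monoidHom H ℂ).comp _ ?_
  intro χ ψ h
  ext g
  have := DFunLike.congr_fun h g⁻¹
  simpa using this

lemma range_ef (hab : ∀ a b : H, a * b = b * a) :
    Set.range (ef : (H →* ℂ) → (H → ℂ)) = Set.range (fun f : H →* ℂ => ⇑f) := by
  letI : CommGroup H := { (inferInstance : Group H) with mul_comm := hab }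
  ext φ
  constructor
  · rintro ⟨χ, rfl⟩; exact ⟨χ.comp invMonoidHom, by funext h; rfl⟩
  · rintro ⟨χ, rfl⟩; exact ⟨χ.comp invMonoidHom, by funext h; simp [ef]⟩

variable [Finite H]

lemma finite_hom (hab : ∀ a b : H, a * b = b * a) :
    Finite (H →* ℂ) ∧ Nat.card (H →* ℂ) = Nat.card H := by
  letI : CommGroup H := { (inferInstance : Group H) with mul_comm := hab }
  haveI : NeZero ((Monoid.exponent H : ℂ)) :=
    ⟨by exact_mod_cast Monoid.exponent_ne_zero_of_finite⟩
  obtain ⟨e⟩ := CommGroup.monoidHom_mulEquiv_of_hasEnoughRootsOfUnity H ℂ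
  have e2 : (H →* ℂ) ≃ (H →* ℂˣ) :=
    { toFun := MonoidHom.toHomUnits
      invFun := fun η => (Units.coeHom ℂ).comp η
      left_inv := fun χ => by ext g; rfl
      right_inv := fun η => by ext g; rfl }
  have : Finite (H →* ℂˣ) := Finite.of_equiv H e.symm.toEquiv
  refine ⟨Finite.of_equiv _ e2.symm, ?_⟩
  rw [Nat.card_congr e2, Nat.card_congr e.toEquiv]

end CharHelpers

noncomputable section CharHelpers2

open Module

variable {H : Type} [Group H] [Fintype H]

lemma sum_hom_eq_zero {η : H →* ℂ} (hη : ⇑η ≠ fun _ => (1:ℂ)) : ∑ g : H, η g = 0 := by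
  have : ∃ g₀ : H, η g₀ ≠ 1 := by
    by_contra hc
    push_neg at hc
    exact hη (funext hc)
  obtain ⟨g₀, hg₀⟩ := this
  have key : η g₀ * ∑ g : H, η g = ∑ g : H, η g := by
    rw [Finset.mul_sum]
    refine Fintype.sum_equiv (Equiv.mulLeft g₀) _ _ (fun g => ?_)
    simp [Equiv.mulLeft, ← map_mul]
  have h2 := sub_eq_zero.mpr key
  rw [← sub_one_mul] at h2
  rcases mul_eq_zero.mp h2 with h | h
  · exact absurd (by linear_combination h) hg₀
  · exact h

lemma orth1 (hab : ∀ a b : H, a * b = b * a) (α β : H →* ℂ) :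
    ∑ g : H, α g⁻¹ * β g = if α = β then (Fintype.card H : ℂ) else 0 := by
  by_cases h : α = β
  · subst h
    have h1 : ∀ g : H, α g⁻¹ * α g = 1 := fun g => by rw [← map_mul]; simp
    rw [Finset.sum_congr rfl (fun g _ => h1 g)]
    simp
  · rw [if_neg h]
    letI : CommGroup H := { (inferInstance : Group H) with mul_comm := hab }
    have hsum0 := sum_hom_eq_zero (η := (α.comp invMonoidHom) * β) ?_
    · rw [← hsum0]
      rfl
    · intro hc
      apply h
      ext g
      have h1 : α g⁻¹ * β g = 1 := congrFun hc g
      have h2 : α g⁻¹ * α g = 1 := by rw [← map_mul]; simp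
      have hne : α g⁻¹ ≠ 0 := fun h0 => by simp [h0] at h2
      exact mul_left_cancel₀ hne (h2.trans h1.symm)

variable [Fintype (H →* ℂ)]

lemma card_hom_eq (hab : ∀ a b : H, a * b = b * a) :
    Fintype.card (H →* ℂ) = Fintype.card H := by
  have h := (finite_hom hab).2
  simpa [Nat.card_eq_fintype_card] using h

lemma span_ef (hab : ∀ a b : H, a * b = b * a) :
    Submodule.span ℂ (Set.range (ef : (H →* ℂ) → (H → ℂ))) = ⊤ := by
  haveI : Nonempty (H →* ℂ) := ⟨1⟩
  exact (li_ef hab).span_eq_top_of_card_eq_finrank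
    (by rw [card_hom_eq hab, Module.finrank_pi])

/-- the coefficient functional -/
noncomputable def coefL (χ : H →* ℂ) : (H → ℂ) →ₗ[ℂ] ℂ where
  toFun φ := (Fintype.card H : ℂ)⁻¹ * ∑ k : H, χ k * φ k
  map_add' φ ψ := by
    simp only [Pi.add_apply, mul_add, Finset.sum_add_distrib]
  map_smul' c φ := by
    simp only [Pi.smul_apply, smul_eq_mul, RingHom.id_apply, Finset.mul_sum]
    exact Finset.sum_congr rfl (fun k _ => by ring)

/-- the projection onto the χ-eigenspace -/
noncomputable def Pj (χ : H →* ℂ) : (H → ℂ) →ₗ[ℂ] (H → ℂ) := (coefL χ).smulRight (ef χ)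

lemma Pj_apply (χ : H →* ℂ) (φ : H → ℂ) :
    Pj χ φ = ((Fintype.card H : ℂ)⁻¹ * ∑ k : H, χ k * φ k) • ef χ := rfl

lemma Pj_apply_ef (hab : ∀ a b : H, a * b = b * a) (χ ψ : H →* ℂ) :
    Pj χ (ef ψ) = if ψ = χ then ef χ else 0 := by
  rw [Pj_apply]
  have : ∑ k : H, χ k * ef ψ k = ∑ k : H, ψ k⁻¹ * χ k := by
    congr 1; funext k; rw [ef]; ring
  rw [this, orth1 hab]
  have hc : (Fintype.card H : ℂ) ≠ 0 := by
    exact_mod_cast Fintype.card_ne_zero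
  by_cases h : ψ = χ <;> simp [h, hc]

lemma sum_Pj (hab : ∀ a b : H, a * b = b * a) :
    ∑ χ : H →* ℂ, Pj (H := H) χ = LinearMap.id := by
  classical
  apply LinearMap.ext_on (span_ef hab)
  rintro φ ⟨ψ, rfl⟩
  have h1 : ((∑ χ : H →* ℂ, Pj (H := H) χ) (ef ψ)) =
      ∑ χ : H →* ℂ, (if ψ = χ then ef χ else 0) := by
    rw [LinearMap.sum_apply]
    exact Finset.sum_congr rfl (fun χ _ => Pj_apply_ef hab χ ψ)
  rw [h1]
  simp

lemma Pj_mem (W : Submodule ℂ (H → ℂ)) (hW : ∀ (g : H) (φ : H → ℂ), φ ∈ W → Tr g φ ∈ W)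
    (χ : H →* ℂ) (φ : H → ℂ) (hφ : φ ∈ W) : Pj χ φ ∈ W := by
  have key : Pj χ φ = (Fintype.card H : ℂ)⁻¹ • ∑ g : H, χ g⁻¹ • Tr g φ := by
    funext h
    have hs : ∑ k : H, (χ k * φ k) * χ h⁻¹ = ∑ g : H, χ g⁻¹ * φ (g⁻¹ * h) := by
      refine Fintype.sum_equiv ((Equiv.inv H).trans (Equiv.mulLeft h)) _ _ (fun k => ?_)
      simp only [Equiv.trans_apply, Equiv.inv_apply, Equiv.coe_mulLeft, mul_inv_rev, inv_inv,
        inv_mul_cancel_right, map_mul]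
      ring
    simp only [Pj_apply, Pi.smul_apply, smul_eq_mul, Finset.sum_apply, Tr_apply, ef]
    rw [mul_assoc, Finset.sum_mul, hs]
  rw [key]
  exact Submodule.smul_mem _ _ (Submodule.sum_mem _ (fun g _ =>
    Submodule.smul_mem _ _ (hW g φ hφ)))

lemma eq_span_setOf (hab : ∀ a b : H, a * b = b * a) (W : Submodule ℂ (H → ℂ))
    (hW : ∀ (g : H) (φ : H → ℂ), φ ∈ W → Tr g φ ∈ W) :
    W = Submodule.span ℂ (ef '' {χ : H →* ℂ | ef χ ∈ W}) := by
  apply le_antisymm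
  · intro φ hφ
    have hid : φ = ∑ χ : H →* ℂ, Pj χ φ := by
      conv_lhs => rw [← LinearMap.id_apply (R := ℂ) φ, ← sum_Pj hab]
      rw [LinearMap.sum_apply]
    rw [hid]
    refine Submodule.sum_mem _ (fun χ _ => ?_)
    by_cases h0 : ((Fintype.card H : ℂ)⁻¹ * ∑ k : H, χ k * φ k) = 0
    · rw [Pj_apply, h0, zero_smul]; exact Submodule.zero_mem _
    · have hefW : ef χ ∈ W := by
        have h2 : ef χ = ((Fintype.card H : ℂ)⁻¹ * ∑ k : H, χ k * φ k)⁻¹ • Pj χ φ := by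
          rw [Pj_apply, smul_smul, inv_mul_cancel₀ h0, one_smul]
        rw [h2]
        exact Submodule.smul_mem _ _ (Pj_mem W hW χ φ hφ)
      rw [Pj_apply]
      exact Submodule.smul_mem _ _ (Submodule.subset_span ⟨χ, hefW, rfl⟩)
  · rw [Submodule.span_le]
    rintro ψ ⟨χ, hχ, rfl⟩
    exact hχ

end CharHelpers2

noncomputable section CharHelpers3

open Module

variable {H : Type} [Group H] [Fintype H] [Fintype (H →* ℂ)]

/-- the set of characters whose eigenfunction lies in `W` -/
def chSet (W : Submodule ℂ (H → ℂ)) : Set (H →* ℂ) := {χ : H →* ℂ | ef χ ∈ W}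

lemma li_sub (hab : ∀ a b : H, a * b = b * a) (W : Submodule ℂ (H → ℂ)) :
    LinearIndependent ℂ (fun χ : chSet W => (⟨ef χ.1, χ.2⟩ : W)) := by
  apply LinearIndependent.of_comp W.subtype
  exact (li_ef hab (H := H)).comp (Subtype.val : chSet W → (H →* ℂ)) Subtype.val_injective

/-- basis of an invariant subspace by eigenfunctions -/
def chBasis (hab : ∀ a b : H, a * b = b * a) (W : Submodule ℂ (H → ℂ))
    (hW : ∀ (g : H) (φ : H → ℂ), φ ∈ W → Tr g φ ∈ W) :
    Basis (chSet W) ℂ W := by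
  refine Basis.mk (li_sub hab W) ?_
  intro x _
  have hx : (x : H → ℂ) ∈ Submodule.span ℂ (ef '' chSet W) := by
    unfold chSet
    rw [← eq_span_setOf hab W hW]; exact x.2
  have himg : Submodule.map W.subtype (Submodule.span ℂ
      (Set.range (fun χ : chSet W => (⟨ef χ.1, χ.2⟩ : W)))) = Submodule.span ℂ (ef '' chSet W) := by
    rw [Submodule.map_span]
    congr 1
    ext ψ
    constructor
    · rintro ⟨w, ⟨χ, rfl⟩, rfl⟩; exact ⟨χ.1, χ.2, rfl⟩
    · rintro ⟨χ, hχ, rfl⟩; exact ⟨⟨ef χ, hχ⟩, ⟨⟨χ, hχ⟩, rfl⟩, rfl⟩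
  rw [← himg] at hx
  obtain ⟨y, hy, hyx⟩ := hx
  have : y = x := Subtype.ext hyx
  rwa [← this]

lemma trace_restrict_eq (hab : ∀ a b : H, a * b = b * a) (W : Submodule ℂ (H → ℂ))
    (hW : ∀ (g : H) (φ : H → ℂ), φ ∈ W → Tr g φ ∈ W) (g : H) :
    LinearMap.trace ℂ W ((Tr g).restrict (p := W) (q := W) (fun φ hφ => hW g φ hφ)) =
      ∑ᶠ χ ∈ chSet W, χ g := by
  classical
  set b := chBasis hab W hW
  rw [LinearMap.trace_eq_matrix_trace ℂ b, Matrix.trace]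
  have hdiag : ∀ χ : chSet W, (LinearMap.toMatrix b b ((Tr g).restrict
      (p := W) (q := W) (fun φ hφ => hW g φ hφ))) χ χ = χ.1 g := by
    intro χ
    rw [LinearMap.toMatrix_apply]
    have hb : (b χ : H → ℂ) = ef χ.1 := by simp [b, chBasis, Basis.mk_apply]
    have hTr : (Tr g).restrict (p := W) (q := W) (fun φ hφ => hW g φ hφ) (b χ) =
        (χ.1 g) • b χ := by
      apply Subtype.ext
      rw [LinearMap.restrict_apply]
      show Tr g (b χ : H → ℂ) = χ.1 g • (b χ : H → ℂ)
      rw [hb, Tr_ef hab]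
    rw [hTr, map_smul]
    simp [b, Basis.repr_self]
  have h1 : ∑ i : chSet W, ((LinearMap.toMatrix b b) ((Tr g).restrict
      (p := W) (q := W) (fun φ hφ => hW g φ hφ))).diag i = ∑ χ : chSet W, χ.1 g :=
    Finset.sum_congr rfl (fun χ _ => by rw [Matrix.diag_apply, hdiag])
  rw [h1]
  have h2 : ∑ᶠ χ ∈ chSet W, χ g = ∑ χ : chSet W, χ.1 g := by
    rw [finsum_mem_eq_toFinset_sum]
    exact Finset.sum_subtype (chSet W).toFinset (fun x => Set.mem_toFinset) (fun χ : H →* ℂ => χ g)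
  rw [h2]

lemma chSet_determines (hab : ∀ a b : H, a * b = b * a) {S T : Set (H →* ℂ)}
    (h : ∀ g : H, (∑ᶠ χ ∈ S, χ g) = ∑ᶠ χ ∈ T, χ g) : S = T := by
  classical
  have hc := Fintype.linearIndependent_iff.mp (linearIndependent_monoidHom H ℂ)
    (fun χ => (if χ ∈ S then (1:ℂ) else 0) - (if χ ∈ T then (1:ℂ) else 0))
  have hsum : ∑ χ : H →* ℂ, ((if χ ∈ S then (1:ℂ) else 0) - (if χ ∈ T then (1:ℂ) else 0)) • ⇑χ
      = 0 := by
    funext g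
    have hg := h g
    rw [finsum_mem_def, finsum_mem_def, finsum_eq_sum_of_fintype, finsum_eq_sum_of_fintype] at hg
    simp only [Set.indicator_apply] at hg
    simp only [Finset.sum_apply, Pi.smul_apply, smul_eq_mul, sub_mul, Finset.sum_sub_distrib,
      ite_mul, one_mul, zero_mul, Pi.zero_apply]
    rw [sub_eq_zero]
    convert hg using 2
  have hall := fun χ => hc hsum χ
  ext χ
  have hχ := hall χ
  by_cases h1 : χ ∈ S <;> by_cases h2 : χ ∈ T
  · simp [h1, h2]
  · simp only [h1, h2, if_true, if_false, sub_zero] at hχ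
    exact absurd hχ one_ne_zero
  · simp only [h1, h2, if_true, if_false, zero_sub, neg_eq_zero] at hχ
    exact absurd hχ one_ne_zero
  · simp [h1, h2]

end CharHelpers3

noncomputable section FDRepHelpers

open CategoryTheory Module

variable {H : Type} [Group H]

/-- the one-dimensional representation attached to a character -/
def homRep (χ : H →* ℂ) : Representation ℂ H ℂ where
  toFun g := χ g • LinearMap.id
  map_one' := by ext x; simp
  map_mul' g h := by
    ext x
    simp [Module.End.mul_apply, smul_smul, map_mul]
    ring_nf

lemma homRep_apply (χ : H →* ℂ) (g : H) (x : ℂ) : homRep χ g x = χ g * x := rfl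

/-- the one-dimensional `FDRep` attached to a character -/
def homFDRep (χ : H →* ℂ) : FDRep ℂ H := FDRep.of (homRep χ)

lemma homFDRep_character (χ : H →* ℂ) (g : H) : (homFDRep χ).character g = χ g := by
  show LinearMap.trace ℂ ℂ (homRep χ g) = χ g
  show LinearMap.trace ℂ ℂ (χ g • LinearMap.id) = χ g
  rw [map_smul, LinearMap.trace_id]
  simp

/-- sub-representation on an invariant subspace -/
def subFDRep (V : FDRep ℂ H) (p : Submodule ℂ V)
    (hp : ∀ (g : H) (v : V), v ∈ p → V.ρ g v ∈ p) : FDRep ℂ H :=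
  FDRep.of (V := p)
    { toFun := fun g => (V.ρ g).restrict (fun v hv => hp g v hv)
      map_one' := by
        ext x
        simp [LinearMap.restrict_apply]
      map_mul' := fun g h => by
        ext x
        simp [LinearMap.restrict_apply, Module.End.mul_apply] }

/-- inclusion of a sub-representation -/
def subIncl (V : FDRep ℂ H) (p : Submodule ℂ V)
    (hp : ∀ (g : H) (v : V), v ∈ p → V.ρ g v ∈ p) : subFDRep V p hp ⟶ V where
  hom := FGModuleCat.ofHom p.subtype
  comm g := by
    ext x
    rfl

lemma subIncl_apply (V : FDRep ℂ H) (p : Submodule ℂ V)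
    (hp : ∀ (g : H) (v : V), v ∈ p → V.ρ g v ∈ p) (x : p) :
    (subIncl V p hp).hom x = (x : V) := rfl

lemma mono_of_injective {X Y : FDRep ℂ H} (f : X ⟶ Y) (hf : Function.Injective f.hom) :
    Mono f := by
  constructor
  intro Z u v huv
  apply Action.Hom.ext
  apply ConcreteCategory.hom_ext
  intro x
  apply hf
  have h1 := congrArg Action.Hom.hom huv
  have h2 := ConcreteCategory.congr_hom h1 x
  simpa using h2

lemma zero_of_hom_zero {X Y : FDRep ℂ H} (f : X ⟶ Y) (hf : f.hom = 0) : f = 0 :=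
  Action.Hom.ext (by rw [hf, Action.zero_hom])

lemma hom_zero_of_zero {X Y : FDRep ℂ H} (f : X ⟶ Y) (hf : f = 0) : f.hom = 0 := by
  rw [hf, Action.zero_hom]

instance simple_homFDRep (χ : H →* ℂ) : Simple (homFDRep χ) := by
  constructor
  intro Y f hm
  constructor
  · intro hiso hf0
    have h1 : (CategoryTheory.inv f ≫ f) = 𝟙 (homFDRep χ) := IsIso.inv_hom_id f
    have h2 := congrArg Action.Hom.hom h1
    rw [Action.comp_hom] at h2
    have hf0' : f.hom = 0 := hom_zero_of_zero f hf0
    rw [hf0'] at h2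
    have h3 := ConcreteCategory.congr_hom h2 (1 : ℂ)
    have h4 : (0 : ℂ) = 1 := h3
    exact zero_ne_one h4
  · intro hf0
    -- f.hom is injective
    have hinj : Function.Injective f.hom.hom.hom := by
      rw [← LinearMap.ker_eq_bot]
      by_contra hk
      have hinv : ∀ (g : H) (v : Y), v ∈ LinearMap.ker f.hom.hom.hom →
          Y.ρ g v ∈ LinearMap.ker f.hom.hom.hom := by
        intro g v hv
        have hcomm := ConcreteCategory.congr_hom (f.comm g) v
        have heq : f.hom (Y.ρ g v) = (homFDRep χ).ρ g (f.hom v) := hcomm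
        have hv0 : f.hom v = 0 := hv
        refine LinearMap.mem_ker.mpr ?_
        exact heq.trans (by rw [hv0]; simp)
      set κ := subIncl Y (LinearMap.ker f.hom.hom.hom) hinv
      have hκf : κ ≫ f = (0 : _ ⟶ homFDRep χ) := by
        apply Action.Hom.ext
        apply ConcreteCategory.hom_ext
        intro x
        have : f.hom ((κ.hom) x) = 0 := by
          exact LinearMap.mem_ker.mp x.2
        exact this
      have hκ0 : κ = 0 := by
        exact (cancel_mono f).mp (by simp [hκf])
      apply hk
      rw [eq_bot_iff]
      intro v hv
      have : κ.hom ⟨v, hv⟩ = 0 := by rw [hκ0, Action.zero_hom]; rfl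
      have hv0 : v = 0 := this
      simp [hv0]
    -- f.hom is surjective
    have hsurj : Function.Surjective f.hom.hom.hom := by
      have h5 : ∀ (p : Submodule ℂ ℂ), p = ⊥ ∨ p = ⊤ := fun p => eq_bot_or_eq_top p
      rw [← LinearMap.range_eq_top]
      rcases h5 (LinearMap.range f.hom.hom.hom) with h | h
      · exfalso
        apply hf0
        apply zero_of_hom_zero
        apply ConcreteCategory.hom_ext
        intro x
        exact LinearMap.congr_fun (LinearMap.range_eq_bot.mp h) x
      · exact h
    set eqv := LinearEquiv.ofBijective f.hom.hom.hom ⟨hinj, hsurj⟩ with heqv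
    have heqvf : ∀ x, eqv x = f.hom.hom.hom x := fun x => rfl
    have h2 : ∀ y, f.hom.hom.hom (eqv.symm y) = y := fun y => by
      rw [← heqvf]; exact eqv.apply_symm_apply y
    refine ⟨⟨⟨FGModuleCat.ofHom eqv.symm.toLinearMap, fun g => ?_⟩, ?_, ?_⟩⟩
    · apply ConcreteCategory.hom_ext
      intro x
      apply hinj
      show f.hom (eqv.symm.toLinearMap ((homFDRep χ).ρ g x)) = f.hom (Y.ρ g (eqv.symm.toLinearMap x))
      have hc := ConcreteCategory.congr_hom (f.comm g) (eqv.symm x)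
      have h1 : f.hom.hom.hom (Y.ρ g (eqv.symm x)) =
          (homFDRep χ).ρ g (f.hom.hom.hom (eqv.symm x)) := hc
      show f.hom.hom.hom (eqv.symm ((homFDRep χ).ρ g x)) = f.hom.hom.hom (Y.ρ g (eqv.symm x))
      rw [h1, h2, h2]
    · apply Action.Hom.ext
      apply ConcreteCategory.hom_ext
      intro x
      show eqv.symm (f.hom.hom.hom x) = x
      rw [← heqvf]
      exact eqv.symm_apply_apply x
    · apply Action.Hom.ext
      apply ConcreteCategory.hom_ext
      intro x
      show f.hom.hom.hom (eqv.symm x) = x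
      exact h2 x

end FDRepHelpers

noncomputable section Schur

open CategoryTheory Module

variable {H : Type} [Group H]

lemma char_of_simple (hab : ∀ a b : H, a * b = b * a) (V : FDRep ℂ H) (hs : Simple V) :
    ∃ χ : H →* ℂ, ∀ g : H, V.character g = χ g := by
  haveI := hs
  have hid : (𝟙 V : V ⟶ V) ≠ 0 := id_nonzero V
  have hfr : finrank ℂ (V ⟶ V) = 1 := finrank_endomorphism_simple_eq_one ℂ V
  have hspan := (finrank_eq_one_iff_of_nonzero' (𝟙 V) hid).mp hfr
  have mkEnd : ∀ g : H, ∃ en : V ⟶ V, en.hom.hom.hom = (V.ρ g : (V : Type) →ₗ[ℂ] (V : Type)) := by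
    intro g
    refine ⟨⟨Action.ρ V g, fun h => ?_⟩, rfl⟩
    apply ConcreteCategory.hom_ext
    intro x
    show V.ρ g (V.ρ h x) = V.ρ h (V.ρ g x)
    rw [← Module.End.mul_apply, ← Module.End.mul_apply, ← map_mul, ← map_mul, hab]
  choose en hen using mkEnd
  have hm : ∀ g : H, ∃ c : ℂ, c • (𝟙 V : V ⟶ V) = en g := fun g => hspan (en g)
  choose c hc using hm
  have hsmul : ∀ (a : ℂ), ((a • (𝟙 V : V ⟶ V)).hom.hom.hom : (V : Type) →ₗ[ℂ] V) = a • LinearMap.id := by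
    intro a
    rw [Action.smul_hom]
    rfl
  have hrho : ∀ g : H, (V.ρ g : (V : Type) →ₗ[ℂ] V) = c g • LinearMap.id := by
    intro g
    have h1 := congrArg (fun f : V ⟶ V => f.hom.hom.hom) (hc g)
    rw [hsmul, hen] at h1
    exact h1.symm
  have huniq : ∀ a b : ℂ, a • (𝟙 V : V ⟶ V) = b • (𝟙 V : V ⟶ V) → a = b := by
    intro a b h
    by_contra hne
    have h0 : (a - b) • (𝟙 V : V ⟶ V) = 0 := by rw [sub_smul, h, sub_self]
    rcases smul_eq_zero.mp h0 with h1 | h1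
    · exact hne (sub_eq_zero.mp h1)
    · exact hid h1
  have hnt : ∃ v : (V : Type), v ≠ 0 := by
    by_contra hv
    push_neg at hv
    apply hid
    apply zero_of_hom_zero
    apply ConcreteCategory.hom_ext
    intro x
    exact hv x
  obtain ⟨v, hv⟩ := hnt
  have hL : ∀ (g : H) (w : (V : Type)), w ∈ Submodule.span ℂ {v} →
      V.ρ g w ∈ Submodule.span ℂ {v} := by
    intro g w hw
    rw [hrho g]
    simp only [LinearMap.smul_apply, LinearMap.id_apply]
    exact Submodule.smul_mem _ _ hw
  set ι := subIncl V (Submodule.span ℂ {v}) hL with hι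
  haveI hmono : Mono ι := mono_of_injective ι (fun x y hxy => Subtype.ext hxy)
  have hι0 : ι ≠ 0 := by
    intro h0
    have h1 : (ι.hom) ⟨v, Submodule.mem_span_singleton_self v⟩ = 0 := by
      rw [hom_zero_of_zero ι h0]; rfl
    exact hv h1
  have hiso : IsIso ι := (Simple.mono_isIso_iff_nonzero ι).mpr hι0
  haveI := hiso
  have hdim : finrank ℂ (V : Type) = 1 := by
    have e := FDRep.isoToLinearEquiv (asIso ι)
    rw [← e.finrank_eq]
    exact finrank_span_singleton hv
  have hchar : ∀ g, V.character g = c g := by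
    intro g
    show LinearMap.trace ℂ _ (V.ρ g) = c g
    rw [hrho g, map_smul, LinearMap.trace_id]
    rw [hdim]
    simp
  have hcmul : ∀ g h : H, c (g * h) = c g * c h := by
    intro g h
    apply huniq
    rw [hc (g * h)]
    have hegh : en (g * h) = en h ≫ en g := by
      apply Action.Hom.ext
      rw [Action.comp_hom]
      apply ConcreteCategory.hom_ext
      intro x
      change (en (g * h)).hom.hom.hom x = (en g).hom.hom.hom ((en h).hom.hom.hom x)
      rw [hen, hen, hen]
      show V.ρ (g * h) x = V.ρ g (V.ρ h x)
      rw [map_mul]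
      rfl
    rw [hegh, ← hc g, ← hc h]
    rw [Linear.smul_comp, Linear.comp_smul, Category.comp_id, smul_smul, mul_comm]
  have he1 : en 1 = 𝟙 V := by
    apply Action.Hom.ext
    apply ConcreteCategory.hom_ext
    intro x
    change (en 1).hom.hom.hom x = x
    rw [hen]
    show V.ρ 1 x = x
    rw [map_one]
    rfl
  have hc1 : c 1 = 1 := by
    apply huniq
    rw [hc 1, he1, one_smul]
  exact ⟨⟨⟨c, hc1⟩, fun a b => hcmul a b⟩, hchar⟩

end Schur

noncomputable section Orth2

open CategoryTheory Module

variable {H : Type} [Group H] [Finite H] [Fintype H]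

lemma orth2 (hab : ∀ a b : H, a * b = b * a) (ρfn : H → ℂ)
    (hρ : ∃ V : FDRep ℂ H, Simple V ∧ ∀ g : H, FDRep.character V g = ρfn g)
    (χ : H →* ℂ) :
    (Fintype.card H : ℂ)⁻¹ * ∑ g : H, ρfn g⁻¹ * χ g
      = if ρfn = ⇑χ then 1 else 0 := by
  classical
  have hcard : (Fintype.card H : ℂ) ≠ 0 := by exact_mod_cast Fintype.card_ne_zero
  by_cases h : ρfn = ⇑χ
  · rw [if_pos h, h]
    have h1 : ∀ g : H, χ g⁻¹ * χ g = 1 := fun g => by rw [← map_mul]; simp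
    rw [Finset.sum_congr rfl (fun g _ => h1 g)]
    simp [hcard]
  · rw [if_neg h]
    obtain ⟨V, hs, hchar⟩ := hρ
    haveI := hs
    letI instI : Invertible ((Nat.card H : ℂ)) :=
      invertibleOfNonzero (by rw [Nat.card_eq_fintype_card]; exact hcard)
    have key := FDRep.char_orthonormal (homFDRep χ) V
    have key2 : ((Nat.card H : ℂ))⁻¹ * ∑ g : H, (homFDRep χ).character g * V.character g⁻¹
        = (if Nonempty (homFDRep χ ≅ V) then (1:ℂ) else 0) := key
    rw [if_neg ?_] at key2
    · have h2 : ∀ g : H, (homFDRep χ).character g * V.character g⁻¹ = ρfn g⁻¹ * χ g := by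
        intro g
        rw [homFDRep_character, hchar]
        ring
      rw [Finset.sum_congr rfl (fun g _ => h2 g)] at key2
      rw [← key2]
      rw [Nat.card_eq_fintype_card]
    · rintro ⟨i⟩
      apply h
      have hci := FDRep.char_iso i
      funext g
      have h3 : (homFDRep χ).character g = V.character g := congrFun hci g
      rw [homFDRep_character] at h3
      rw [← hchar g, ← h3]

end Orth2

noncomputable section IrrBridge

open Module

open scoped Classical

variable {n : ℕ} {G : Subgroup (GL (Fin n) ℂ)} [Finite G]

/-- the irreducible character attached to a monoid hom -/
def irrOf (χ : ↥G →* ℂ) : IrrChar G :=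
  ⟨⇑χ, homFDRep χ, inferInstance, fun g => homFDRep_character χ g⟩

lemma irrOf_val (χ : ↥G →* ℂ) : (irrOf χ).1 = ⇑χ := rfl

lemma irrOf_injective : Function.Injective (irrOf (G := G)) := by
  intro a b h
  have h1 := congrArg Subtype.val h
  exact MonoidHom.ext (fun g => congrFun h1 g)

lemma irrOf_surjective (hab : ∀ a b : ↥G, a * b = b * a) :
    Function.Surjective (irrOf (G := G)) := by
  rintro ⟨f, hex⟩
  obtain ⟨V, hs, hchar⟩ := hex
  obtain ⟨χ, hχ⟩ := char_of_simple hab V hs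
  refine ⟨χ, Subtype.ext ?_⟩
  funext g
  show χ g = f g
  rw [← hχ g, hchar g]

lemma multChar_sum (hab : ∀ a b : ↥G, a * b = b * a) (S : Set (↥G →* ℂ)) (ρ : IrrChar G) :
    multChar ρ (fun g => ∑ᶠ χ ∈ S, χ g) = if ρ ∈ irrOf '' S then 1 else 0 := by
  classical
  haveI : Finite (↥G →* ℂ) := (finite_hom hab).1
  letI : Fintype (↥G →* ℂ) := Fintype.ofFinite _
  letI : Fintype ↥G := Fintype.ofFinite _
  rw [multChar]
  rw [finsum_eq_sum_of_fintype]
  have hswap : ∑ g : ↥G, ρ.1 g⁻¹ * (∑ᶠ χ ∈ S, χ g)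
      = ∑ χ ∈ S.toFinset, ∑ g : ↥G, ρ.1 g⁻¹ * χ g := by
    rw [Finset.sum_congr rfl (fun g _ => by
      rw [finsum_mem_eq_toFinset_sum, Finset.mul_sum])]
    rw [Finset.sum_comm]
  rw [hswap, Finset.mul_sum, Nat.card_eq_fintype_card]
  have horth : ∀ χ ∈ S.toFinset, (Fintype.card ↥G : ℂ)⁻¹ * ∑ g : ↥G, ρ.1 g⁻¹ * χ g
      = if ρ.1 = ⇑χ then 1 else 0 := fun χ _ => orth2 hab ρ.1 ρ.2 χ
  rw [Finset.sum_congr rfl horth]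
  by_cases hmem : ρ ∈ irrOf '' S
  · obtain ⟨χ₀, hχ₀S, hχ₀⟩ := hmem
    rw [if_pos ⟨χ₀, hχ₀S, hχ₀⟩]
    rw [Finset.sum_eq_single_of_mem χ₀ (Set.mem_toFinset.mpr hχ₀S)]
    · rw [if_pos]
      rw [← hχ₀]
      rfl
    · intro χ hχmem hne
      rw [if_neg]
      intro heq
      apply hne
      apply irrOf_injective
      rw [hχ₀]
      exact Subtype.ext (heq.symm : (irrOf χ).1 = ρ.1)
  · rw [if_neg hmem]
    apply Finset.sum_eq_zero
    intro χ hχ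
    rw [if_neg]
    intro heq
    exact hmem ⟨χ, Set.mem_toFinset.mp hχ, Subtype.ext (heq.symm : (irrOf χ).1 = ρ.1)⟩

lemma thetaOfChar_sum (hab : ∀ a b : ↥G, a * b = b * a) (S : Set (↥G →* ℂ))
    (θ' : IrrChar G → ℚ) :
    thetaOfChar θ' (fun g => ∑ᶠ χ ∈ S, χ g) = ((∑ᶠ ρ ∈ (irrOf '' S), θ' ρ : ℚ) : ℂ) := by
  classical
  haveI : Finite (↥G →* ℂ) := (finite_hom hab).1
  haveI : Finite (IrrChar G) := Finite.of_surjective _ (irrOf_surjective hab)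
  letI : Fintype (IrrChar G) := Fintype.ofFinite _
  rw [thetaOfChar, finsum_eq_sum_of_fintype]
  rw [Finset.sum_congr rfl (fun ρ _ => by rw [multChar_sum hab S ρ])]
  rw [finsum_mem_eq_toFinset_sum]
  push_cast
  rw [Finset.sum_congr rfl (fun ρ (_ : ρ ∈ Finset.univ) => by
    rw [show (if ρ ∈ irrOf '' S then (1:ℂ) else 0) = (if ρ ∈ (irrOf '' S).toFinset then (1:ℂ) else 0) by
      simp [Set.mem_toFinset]])]
  simp only [ite_mul, one_mul, zero_mul]
  rw [Finset.sum_ite_mem, Finset.univ_inter]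

lemma sum_image_val (S : Set (↥G →* ℂ)) (g : ↥G) :
    (∑ᶠ ρ ∈ (irrOf (G := G) '' S), ρ.1 g) = ∑ᶠ χ ∈ S, χ g :=
  finsum_mem_image (f := fun ρ : IrrChar G => ρ.1 g) (irrOf_injective.injOn)

lemma irr_set_determines (hab : ∀ a b : ↥G, a * b = b * a) {A B : Set (IrrChar G)}
    (h : ∀ g : ↥G, (∑ᶠ ρ ∈ A, ρ.1 g) = ∑ᶠ ρ ∈ B, ρ.1 g) : A = B := by
  letI : Fintype ↥G := Fintype.ofFinite _
  haveI : Finite (↥G →* ℂ) := (finite_hom hab).1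
  letI : Fintype (↥G →* ℂ) := Fintype.ofFinite _
  have hA : irrOf '' (irrOf ⁻¹' A) = A := Set.image_preimage_eq A (irrOf_surjective hab)
  have hB : irrOf '' (irrOf ⁻¹' B) = B := Set.image_preimage_eq B (irrOf_surjective hab)
  have h' : ∀ g : ↥G, (∑ᶠ χ ∈ irrOf (G := G) ⁻¹' A, χ g) = ∑ᶠ χ ∈ irrOf (G := G) ⁻¹' B, χ g := by
    intro g
    have hg := h g
    rw [← hA, ← hB, sum_image_val, sum_image_val] at hg
    exact hg
  have heq := chSet_determines hab h'
  rw [← hA, ← hB, heq]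

end IrrBridge


noncomputable section GModHelpers

open Module

lemma trace_restrict_map_eq {F₁ F₂ : Type} [AddCommGroup F₁] [Module ℂ F₁]
    [AddCommGroup F₂] [Module ℂ F₂]
    (φ : F₁ →ₗ[ℂ] F₂) (hφ : Function.Injective φ) (r₁ : F₁ →ₗ[ℂ] F₁) (r₂ : F₂ →ₗ[ℂ] F₂)
    (hcomm : ∀ v, φ (r₁ v) = r₂ (φ v)) (E : Submodule ℂ F₁)
    (h₁ : ∀ v ∈ E, r₁ v ∈ E) (h₂ : ∀ w ∈ E.map φ, r₂ w ∈ E.map φ) :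
    LinearMap.trace ℂ (E.map φ) (r₂.restrict h₂) = LinearMap.trace ℂ E (r₁.restrict h₁) := by
  have hres : ∀ v ∈ E, φ v ∈ E.map φ := fun v hv => Submodule.mem_map_of_mem hv
  set ψ := φ.restrict (p := E) (q := E.map φ) hres with hψ
  have hbij : Function.Bijective ψ := by
    constructor
    · intro a b hab2
      apply Subtype.ext
      apply hφ
      exact congrArg Subtype.val hab2
    · rintro ⟨y, v, hv, rfl⟩
      exact ⟨⟨v, hv⟩, rfl⟩
  set eqv := LinearEquiv.ofBijective ψ hbij with heqv
  have hconj : r₂.restrict h₂ = eqv.conj (r₁.restrict h₁) := by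
    apply LinearMap.ext
    intro x
    rw [LinearEquiv.conj_apply]
    apply Subtype.ext
    have hsymm : φ ((eqv.symm x : E) : F₁) = (x : (E.map φ : Submodule ℂ F₂)) := by
      have h3 : ((eqv (eqv.symm x) : (E.map φ : Submodule ℂ F₂)) : F₂)
          = φ ((eqv.symm x : E) : F₁) := rfl
      rw [eqv.apply_symm_apply] at h3
      exact h3.symm
    show r₂ (x : F₂) = φ (r₁ ((eqv.symm x : E) : F₁))
    rw [hcomm, hsymm]
  rw [hconj, LinearMap.trace_conj']

variable {n : ℕ} {G : Subgroup (GL (Fin n) ℂ)} [Finite G]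
variable {F : Type} [AddCommGroup F] [Module ℂ F]

lemma actG_comm_Tr (M : GMod n G F) (e : F ≃ₗ[ℂ] (↥G → ℂ))
    (he : ∀ (g : ↥G) (v : F) (h : ↥G), e (M.actG g v) h = e v (g⁻¹ * h)) (g : ↥G) :
    ∀ v : F, e.toLinearMap ((M.actG g : F →ₗ[ℂ] F) v) = Tr g (e.toLinearMap v) := by
  intro v
  funext h'
  rw [Tr_apply]
  exact he g v h'

lemma map_invariant (M : GMod n G F) (e : F ≃ₗ[ℂ] (↥G → ℂ))
    (he : ∀ (g : ↥G) (v : F) (h : ↥G), e (M.actG g v) h = e v (g⁻¹ * h))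
    (E : Submodule ℂ F) (h : ∀ (g : ↥G) (v : F), v ∈ E → M.actG g v ∈ E) :
    ∀ (g : ↥G) (φ : ↥G → ℂ), φ ∈ E.map e.toLinearMap → Tr g φ ∈ E.map e.toLinearMap := by
  rintro g φ ⟨v, hv, rfl⟩
  exact ⟨M.actG g v, h g v hv, actG_comm_Tr M e he g v⟩

lemma subChar_eq (hab : ∀ a b : ↥G, a * b = b * a) (M : GMod n G F) (e : F ≃ₗ[ℂ] (↥G → ℂ))
    (he : ∀ (g : ↥G) (v : F) (h : ↥G), e (M.actG g v) h = e v (g⁻¹ * h))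
    (E : Submodule ℂ F) (h : ∀ (g : ↥G) (v : F), v ∈ E → M.actG g v ∈ E) (g : ↥G) :
    M.subChar E h g = ∑ᶠ χ ∈ chSet (E.map e.toLinearMap), χ g := by
  letI : Fintype ↥G := Fintype.ofFinite _
  haveI : Finite (↥G →* ℂ) := (finite_hom hab).1
  letI : Fintype (↥G →* ℂ) := Fintype.ofFinite _
  have hW := map_invariant M e he E h
  have t1 := trace_restrict_map_eq e.toLinearMap e.injective ((M.actG g : F ≃ₗ[ℂ] F) : F →ₗ[ℂ] F)
    (Tr g) (actG_comm_Tr M e he g) E (fun v hv => h g v hv) (fun w hw => hW g w hw)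
  have t2 := trace_restrict_eq hab (E.map e.toLinearMap) hW g
  exact (t1.symm.trans t2)

lemma chSet_empty_iff (hab : ∀ a b : ↥G, a * b = b * a)
    (W : Submodule ℂ (↥G → ℂ)) (hW : ∀ (g : ↥G) (φ : ↥G → ℂ), φ ∈ W → Tr g φ ∈ W) :
    chSet W = ∅ ↔ W = ⊥ := by
  letI : Fintype ↥G := Fintype.ofFinite _
  haveI : Finite (↥G →* ℂ) := (finite_hom hab).1
  letI : Fintype (↥G →* ℂ) := Fintype.ofFinite _
  constructor
  · intro hempty
    have h1 := eq_span_setOf hab W hW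
    have h2 : {χ : ↥G →* ℂ | ef χ ∈ W} = ∅ := hempty
    rw [h2] at h1
    simpa using h1
  · intro hbot
    ext χ
    simp only [Set.mem_empty_iff_false, iff_false]
    intro hχ
    have h1 : ef χ ∈ (⊥ : Submodule ℂ (↥G → ℂ)) := hbot ▸ hχ
    have h2 : ef χ = 0 := by simpa using h1
    have h3 := congrFun h2 1
    simp [ef] at h3

lemma chSet_univ_iff (hab : ∀ a b : ↥G, a * b = b * a)
    (W : Submodule ℂ (↥G → ℂ)) (hW : ∀ (g : ↥G) (φ : ↥G → ℂ), φ ∈ W → Tr g φ ∈ W) :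
    chSet W = Set.univ ↔ W = ⊤ := by
  letI : Fintype ↥G := Fintype.ofFinite _
  haveI : Finite (↥G →* ℂ) := (finite_hom hab).1
  letI : Fintype (↥G →* ℂ) := Fintype.ofFinite _
  constructor
  · intro huniv
    have h1 := eq_span_setOf hab W hW
    have h2 : {χ : ↥G →* ℂ | ef χ ∈ W} = Set.univ := huniv
    rw [h2, Set.image_univ, span_ef hab] at h1
    exact h1
  · intro htop
    ext χ
    simp only [Set.mem_univ, iff_true]
    show ef χ ∈ W
    rw [htop]
    trivial

end GModHelpers

/-- (`n = 3`, `G ⊆ SL(3,ℂ)` finite abelian.) With `θ, θ₀, A₁` as before,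
let `F` be a `θ`-stable `G`-constellation with `θ₀(E) ≥ 0` for every `G`-submodule `E`.
If `F` is not `θ₀`-stable, then `F` has a `G`-submodule `S` with `θ₀(S) = 0` whose
underlying `G`-representation is `⊕_{ρ∈A₁} ρ` or `⊕_{ρ∈A₂} ρ`, and every such submodule
(realised by any injective `G`-equivariant `A`-linear map) is itself `θ₀`-stable. -/
theorem stmt6 {G : Subgroup (GL (Fin 3) ℂ)} [Finite G]
    (hab : ∀ a b : G, a * b = b * a)
    (hSL : ∀ g : G, Matrix.det ((g : GL (Fin 3) ℂ) : Matrix (Fin 3) (Fin 3) ℂ) = 1)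
    (θ θ₀ : IrrChar G → ℚ) (hθ : IsThetaParam G θ) (hθ₀ : IsThetaParam G θ₀)
    (A₁ : Set (IrrChar G)) (hne : A₁.Nonempty) (hproper : A₁ ≠ Set.univ)
    (hA₁zero : (∑ᶠ ρ ∈ A₁, θ₀ ρ) = 0)
    (honly : ∀ A : Set (IrrChar G), A.Nonempty → A ≠ Set.univ →
      (∑ᶠ ρ ∈ A, θ₀ ρ) = 0 → A = A₁ ∨ A = A₁ᶜ)
    {F : Type} [AddCommGroup F] [Module ℂ F] (M : GMod 3 G F)
    (hcon : M.IsConstellation) (hstab : M.IsStable θ)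
    (hss : ∀ (E : Submodule ℂ F) (hE : M.IsSub E),
      0 ≤ (thetaOfChar θ₀ (M.subChar E hE.2)).re)
    (hnot : ¬ M.IsStable θ₀) :
    (∃ (S : Submodule ℂ F) (hS : M.IsSub S),
      thetaOfChar θ₀ (M.subChar S hS.2) = 0 ∧
      ((∀ g : G, M.subChar S hS.2 g = ∑ᶠ ρ ∈ A₁, ρ.1 g) ∨
       (∀ g : G, M.subChar S hS.2 g = ∑ᶠ ρ ∈ A₁ᶜ, ρ.1 g))) ∧
    (∀ (S : Submodule ℂ F) (hS : M.IsSub S),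
      thetaOfChar θ₀ (M.subChar S hS.2) = 0 →
      ((∀ g : G, M.subChar S hS.2 g = ∑ᶠ ρ ∈ A₁, ρ.1 g) ∨
       (∀ g : G, M.subChar S hS.2 g = ∑ᶠ ρ ∈ A₁ᶜ, ρ.1 g)) →
      ∀ (S' : Type) [AddCommGroup S'] [Module ℂ S'] (MS : GMod 3 G S')
        (ι : S' →ₗ[ℂ] F), IsGHom MS M ι → Function.Injective ι →
        LinearMap.range ι = S → MS.IsStable θ₀) := by
  classical
  obtain ⟨hfd, e, he⟩ := hcon
  haveI := hfd
  letI : Fintype ↥G := Fintype.ofFinite _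
  haveI hfinhom : Finite (↥G →* ℂ) := (finite_hom hab).1
  letI : Fintype (↥G →* ℂ) := Fintype.ofFinite _
  -- the key character computations
  have key : ∀ (E : Submodule ℂ F) (h : ∀ (g : ↥G) (v : F), v ∈ E → M.actG g v ∈ E),
      (∀ g : ↥G, M.subChar E h g = ∑ᶠ ρ ∈ (irrOf '' chSet (E.map e.toLinearMap)), ρ.1 g) ∧
      (∀ θ' : IrrChar G → ℚ, thetaOfChar θ' (M.subChar E h)
          = ((∑ᶠ ρ ∈ (irrOf '' chSet (E.map e.toLinearMap)), θ' ρ : ℚ) : ℂ)) := by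
    intro E h
    have hchar : ∀ g, M.subChar E h g = ∑ᶠ χ ∈ chSet (E.map e.toLinearMap), χ g :=
      fun g => subChar_eq hab M e he E h g
    constructor
    · intro g
      rw [hchar g, ← sum_image_val]
    · intro θ'
      have hfun : M.subChar E h = (fun g => ∑ᶠ χ ∈ chSet (E.map e.toLinearMap), χ g) :=
        funext hchar
      rw [hfun, thetaOfChar_sum hab]
  have getq : ∀ (E : Submodule ℂ F) (h : ∀ (g : ↥G) (v : F), v ∈ E → M.actG g v ∈ E),
      (thetaOfChar θ₀ (M.subChar E h)).re = 0 →
      (∑ᶠ ρ ∈ irrOf '' chSet (E.map e.toLinearMap), θ₀ ρ) = 0 := by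
    intro E h h0
    rw [(key E h).2 θ₀] at h0
    exact_mod_cast h0
  have himg_univ : ∀ S : Set (↥G →* ℂ), irrOf '' S = Set.univ ↔ S = Set.univ := by
    intro S
    constructor
    · intro hu
      ext χ
      simp only [Set.mem_univ, iff_true]
      have h1 : irrOf χ ∈ irrOf '' S := by rw [hu]; trivial
      obtain ⟨χ', hχ', heq⟩ := h1
      rwa [← irrOf_injective heq]
    · intro hu
      rw [hu, Set.image_univ, Set.range_eq_univ]
      exact irrOf_surjective hab
  have hmapinj := Submodule.map_injective_of_injective (f := e.toLinearMap) e.injective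
  have hmtop : (⊤ : Submodule ℂ F).map e.toLinearMap = ⊤ := by
    rw [Submodule.map_top]
    exact LinearMap.range_eq_top.mpr e.surjective
  have classify : ∀ (E : Submodule ℂ F) (hE : M.IsSub E), E ≠ ⊥ → E ≠ ⊤ →
      (thetaOfChar θ₀ (M.subChar E hE.2)).re = 0 →
      (irrOf '' chSet (E.map e.toLinearMap)) = A₁ ∨
        (irrOf '' chSet (E.map e.toLinearMap)) = A₁ᶜ := by
    intro E hE hb ht h0
    apply honly _ ?_ ?_ (getq E hE.2 h0)
    · rw [Set.nonempty_iff_ne_empty]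
      intro hA
      apply hb
      rw [Set.image_eq_empty] at hA
      have hWbot := (chSet_empty_iff hab _ (map_invariant M e he E hE.2)).mp hA
      apply hmapinj
      rw [hWbot, Submodule.map_bot]
    · intro hA
      apply ht
      have hSuniv := (himg_univ _).mp hA
      have hWtop := (chSet_univ_iff hab _ (map_invariant M e he E hE.2)).mp hSuniv
      apply hmapinj
      rw [hWtop, hmtop]
  unfold GMod.IsStable at hnot
  push_neg at hnot
  obtain ⟨E₀, hE₀, hE₀b, hE₀t, hE₀le⟩ := hnot
  have h00 : (thetaOfChar θ₀ (M.subChar E₀ hE₀.2)).re = 0 :=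
    le_antisymm hE₀le (hss E₀ hE₀)
  have hcls₀ := classify E₀ hE₀ hE₀b hE₀t h00
  refine ⟨⟨E₀, hE₀, ?_, ?_⟩, ?_⟩
  · rw [(key E₀ hE₀.2).2 θ₀, getq E₀ hE₀.2 h00]
    norm_num
  · rcases hcls₀ with hA | hA
    · left
      intro g
      rw [(key E₀ hE₀.2).1 g, hA]
    · right
      intro g
      rw [(key E₀ hE₀.2).1 g, hA]
  · intro S hS hSzero hSchar S' instAG instMod MS ι hGhom hinj hrange
    have hAS : irrOf '' chSet (S.map e.toLinearMap) = A₁ ∨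
        irrOf '' chSet (S.map e.toLinearMap) = A₁ᶜ := by
      rcases hSchar with hc | hc
      · left
        apply irr_set_determines hab
        intro g
        rw [← (key S hS.2).1 g, hc g]
      · right
        apply irr_set_determines hab
        intro g
        rw [← (key S hS.2).1 g, hc g]
    have hStop : S ≠ ⊤ := by
      intro hT
      have h1 : chSet (S.map e.toLinearMap) = Set.univ := by
        apply (chSet_univ_iff hab _ (map_invariant M e he S hS.2)).mpr
        rw [hT, hmtop]
      have h2 : irrOf '' chSet (S.map e.toLinearMap) = Set.univ := by
        rw [h1, Set.image_univ, Set.range_eq_univ]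
        exact irrOf_surjective hab
      rcases hAS with hA | hA
      · exact hproper (hA.symm.trans h2)
      · have h3 : A₁ᶜ = Set.univ := hA.symm.trans h2
        obtain ⟨ρ, hρ⟩ := hne
        have : ρ ∈ A₁ᶜ := by rw [h3]; trivial
        exact this hρ
    intro E' hE' hE'b hE't
    have hEsub : M.IsSub (E'.map ι) := by
      constructor
      · rintro f w ⟨v, hv, rfl⟩
        exact ⟨MS.actA f v, hE'.1 f v hv, hGhom.1 f v⟩
      · rintro g w ⟨v, hv, rfl⟩
        exact ⟨MS.actG g v, hE'.2 g v hv, hGhom.2 g v⟩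
    have hsubchar : ∀ g, MS.subChar E' hE'.2 g = M.subChar (E'.map ι) hEsub.2 g := by
      intro g
      exact (trace_restrict_map_eq ι hinj ((MS.actG g : S' ≃ₗ[ℂ] S') : S' →ₗ[ℂ] S')
        ((M.actG g : F ≃ₗ[ℂ] F) : F →ₗ[ℂ] F) (fun v => hGhom.2 g v) E'
        (fun v hv => hE'.2 g v hv) (fun w hw => hEsub.2 g w hw)).symm
    have hfun : MS.subChar E' hE'.2 = M.subChar (E'.map ι) hEsub.2 := funext hsubchar
    rw [hfun]
    have hge : 0 ≤ (thetaOfChar θ₀ (M.subChar (E'.map ι) hEsub.2)).re := hss (E'.map ι) hEsub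
    rcases lt_or_eq_of_le hge with hlt | heq0
    · exact hlt
    exfalso
    have h0 : (thetaOfChar θ₀ (M.subChar (E'.map ι) hEsub.2)).re = 0 := heq0.symm
    have hmapι := Submodule.map_injective_of_injective (f := ι) hinj
    have hEb : E'.map ι ≠ ⊥ := by
      intro hb
      apply hE'b
      apply hmapι
      rw [Submodule.map_bot]
      exact hb
    have hES : E'.map ι ≤ S := by
      rw [← hrange]
      rintro x ⟨v, hv, rfl⟩
      exact ⟨v, rfl⟩
    have hEt : E'.map ι ≠ ⊤ := by
      intro ht
      exact hStop (eq_top_iff.mpr (ht ▸ hES))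
    have hcls := classify (E'.map ι) hEsub hEb hEt h0
    have hEneS : E'.map ι ≠ S := by
      intro hEq
      apply hE't
      apply hmapι
      rw [Submodule.map_top, hrange, ← hEq]
    have hsub : irrOf '' chSet ((E'.map ι).map e.toLinearMap) ⊆
        irrOf '' chSet (S.map e.toLinearMap) :=
      Set.image_mono (fun χ hχ => (Submodule.map_mono hES) hχ)
    have hneq : irrOf '' chSet ((E'.map ι).map e.toLinearMap) ≠
        irrOf '' chSet (S.map e.toLinearMap) := by
      intro hEq
      apply hEneS
      have h1 : chSet ((E'.map ι).map e.toLinearMap) = chSet (S.map e.toLinearMap) :=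
        (Set.image_injective.mpr irrOf_injective) hEq
      have h2 : (E'.map ι).map e.toLinearMap = S.map e.toLinearMap := by
        rw [eq_span_setOf hab _ (map_invariant M e he (E'.map ι) hEsub.2),
            eq_span_setOf hab _ (map_invariant M e he S hS.2)]
        have h3 : {χ : ↥G →* ℂ | ef χ ∈ (E'.map ι).map e.toLinearMap}
            = {χ : ↥G →* ℂ | ef χ ∈ S.map e.toLinearMap} := h1
        rw [h3]
      exact hmapinj h2
    rcases hcls with hA | hA <;> rcases hAS with hB | hB
    · exact hneq (hA.trans hB.symm)
    · rw [hA, hB] at hsub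
      obtain ⟨ρ, hρ⟩ := hne
      exact (hsub hρ) hρ
    · rw [hA, hB] at hsub
      apply hproper
      ext ρ
      simp only [Set.mem_univ, iff_true]
      by_contra hρ
      exact hρ (hsub hρ)
    · exact hneq (hA.trans hB.symm)
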